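/- Let R be a commutative ring, A a finite abelian group, f : A × A → R a function, and B a commutative R-algebra which is free as an R-module with basis (v_λ)_{λ ∈ A} such that v_0 = 1 and v_λ · v_{λ'} = f(λ, λ') · v_{λ+λ'} for all λ, λ' ∈ A. Then the determinant of the trace matrix (tr_{B/R}(v_λ · v_μ))_{λ,μ ∈ A} (the discriminant of B over R with respect to the basis v) equals ε · |A|^{|A|} · ∏_{λ ∈ A} f(λ, −λ), where ε ∈ {±1} is the sign of the permutation λ ↦ −λ of A. -/

import Mathlib

/-- The determinant of the trace matrix `(tr_{B/R}(v λ * v μ))_{λ,μ}` of the algebra of a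
ramified `D(A)`-cover with trivialized line bundles equals
`ε * |A| ^ |A| * ∏_{λ ∈ A} f (λ, -λ)`, where `ε` is the sign of the permutation `λ ↦ -λ`. -/
theorem stacky_covers_discriminant_formula (R B A : Type*) [CommRing R] [CommRing B]
    [Algebra R B] [AddCommGroup A] [Fintype A] [DecidableEq A] (f : A × A → R)
    (v : Module.Basis A R B) (hv0 : v 0 = 1)
    (hmul : ∀ lam lam' : A, v lam * v lam' = f (lam, lam') • v (lam + lam')) :
    (Algebra.traceMatrix R ⇑v).det =
      ((Equiv.Perm.sign (Equiv.neg A) : ℤ) : R) * (Fintype.card A : R) ^ Fintype.card A *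
        ∏ lam : A, f (lam, -lam) := by
  classical
  have hf0 : ∀ k : A, f (0, k) = 1 := by
    intro k
    have h := hmul 0 k
    rw [hv0, one_mul, zero_add] at h
    have h2 := congrArg (fun x => v.repr x k) h
    simpa using h2.symm
  have hentry : ∀ lam mu : A, Algebra.traceMatrix R ⇑v lam mu =
      if mu = -lam then (Fintype.card A : R) * f (lam, -lam) else 0 := by
    intro lam mu
    rw [Algebra.traceMatrix_apply, Algebra.traceForm_apply,
      Algebra.trace_eq_matrix_trace v, Matrix.trace]
    have hdiag : ∀ k : A, (Algebra.leftMulMatrix v (v lam * v mu)).diag k =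
        if mu = -lam then f (lam, -lam) else 0 := by
      intro k
      rw [Matrix.diag_apply, Algebra.leftMulMatrix_eq_repr_mul]
      rw [hmul lam mu, smul_mul_assoc, hmul (lam + mu) k]
      simp only [map_smul, Module.Basis.repr_self, Finsupp.smul_single, smul_eq_mul,
        Finsupp.smul_apply, Finsupp.single_apply]
      by_cases h : mu = -lam
      · subst h
        simp [hf0 k]
      · have : ¬ (lam + mu + k = k) := by
          intro hc
          apply h
          have : lam + mu = 0 := by
            have := add_right_cancel (b := k) (by simpa using hc)
            simpa using this
          linear_combination (norm := abel) this
        simp [this, if_neg h, eq_comm]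
    simp only [hdiag]
    by_cases h : mu = -lam <;> simp [h, Finset.sum_const, Finset.card_univ, nsmul_eq_mul]
  have hM : Algebra.traceMatrix R ⇑v =
      Matrix.diagonal (fun lam => (Fintype.card A : R) * f (lam, -lam)) *
        (Equiv.neg A).permMatrix R := by
    ext lam mu
    rw [Matrix.diagonal_mul, hentry]
    simp [Equiv.Perm.permMatrix, PEquiv.toMatrix, Equiv.toPEquiv, mul_ite, eq_comm]
  rw [hM, Matrix.det_mul, Matrix.det_diagonal, Matrix.det_permutation]
  rw [Finset.prod_mul_distrib, Finset.prod_const, Finset.card_univ]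
  ring
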